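/- If Q is a doubly stochastic 4×4 real matrix such that all entries of QᵀQ are strictly positive, then ‖Q − W‖ < 1, where W is the 4×4 matrix with all entries 1/4 and ‖·‖ is the operator norm induced by the Euclidean norm. -/

import Mathlib

set_option maxHeartbeats 1000000


open Matrix

/-- The 4×4 matrix all of whose entries equal 1/4. -/
noncomputable def Wmat : Matrix (Fin 4) (Fin 4) ℝ := fun _ _ => 1/4

/-- `Q` is doubly stochastic. -/
def IsDoublyStochastic (Q : Matrix (Fin 4) (Fin 4) ℝ) : Prop :=
  (∀ i j, 0 ≤ Q i j) ∧ (∀ i, ∑ j, Q i j = 1) ∧ (∀ j, ∑ i, Q i j = 1)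

/-- The operator norm (induced by the Euclidean norm on ℝ⁴) of a 4×4 real matrix. -/
noncomputable def euclOpNorm (A : Matrix (Fin 4) (Fin 4) ℝ) : ℝ :=
  ‖(Matrix.toEuclideanLin A : EuclideanSpace ℝ (Fin 4) →ₗ[ℝ]
      EuclideanSpace ℝ (Fin 4)).toContinuousLinearMap‖

lemma keyQuad (S : Matrix (Fin 4) (Fin 4) ℝ) (ε : ℝ)
    (hle : ∀ i j, ε ≤ S i j)
    (hrow : ∀ i, ∑ j, S i j = 1) (hcol : ∀ j, ∑ i, S i j = 1)
    (x : Fin 4 → ℝ) :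
    ∑ j, ∑ k, S j k * x j * x k - (∑ i, x i)^2/4 ≤ (1 - 4*ε) * ∑ i, (x i)^2 := by
  have hε4 : 4 * ε ≤ 1 := by
    have h := hrow 0
    simp only [Fin.sum_univ_four] at h
    have h0 := hle 0 0; have h1 := hle 0 1; have h2 := hle 0 2; have h3 := hle 0 3
    linarith
  simp only [Fin.sum_univ_four]
  have H : ∀ j k : Fin 4, 0 ≤ (S j k - ε) * (x j - x k)^2 := fun j k =>
    mul_nonneg (by linarith [hle j k]) (sq_nonneg _)
  have hR : ∀ j : Fin 4, (S j 0 + S j 1 + S j 2 + S j 3) * (x j)^2 = (x j)^2 := by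
    intro j
    have h := hrow j; simp only [Fin.sum_univ_four] at h; rw [h, one_mul]
  have hC : ∀ k : Fin 4, (S 0 k + S 1 k + S 2 k + S 3 k) * (x k)^2 = (x k)^2 := by
    intro k
    have h := hcol k; simp only [Fin.sum_univ_four] at h; rw [h, one_mul]
  have hs : 0 ≤ (1/4 - ε) * (x 0 + x 1 + x 2 + x 3)^2 :=
    mul_nonneg (by linarith) (sq_nonneg _)
  linarith [H 0 0, H 0 1, H 0 2, H 0 3, H 1 0, H 1 1, H 1 2, H 1 3,
    H 2 0, H 2 1, H 2 2, H 2 3, H 3 0, H 3 1, H 3 2, H 3 3, hs,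
    hR 0, hR 1, hR 2, hR 3, hC 0, hC 1, hC 2, hC 3]

theorem opNorm_sub_W_lt_one_of_pos_QTQ (Q : Matrix (Fin 4) (Fin 4) ℝ)
    (hQ : IsDoublyStochastic Q)
    (hpos : ∀ i j, 0 < (Q.transpose * Q) i j) :
    euclOpNorm (Q - Wmat) < 1 := by
  obtain ⟨hnn, hrowQ, hcolQ⟩ := hQ
  set S : Matrix (Fin 4) (Fin 4) ℝ := Q.transpose * Q with hS
  -- ε : minimum entry of S
  set ε : ℝ := Finset.inf' Finset.univ Finset.univ_nonempty
      (fun p : Fin 4 × Fin 4 => S p.1 p.2) with hε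
  have hεpos : 0 < ε := by
    rw [hε, Finset.lt_inf'_iff]
    exact fun p _ => hpos p.1 p.2
  have hεle : ∀ i j, ε ≤ S i j := fun i j =>
    Finset.inf'_le _ (Finset.mem_univ (i, j))
  -- row and column sums of S
  have hrowS : ∀ i, ∑ j, S i j = 1 := by
    intro i
    simp only [hS, Matrix.mul_apply, Matrix.transpose_apply]
    rw [Finset.sum_comm]
    simp_rw [← Finset.mul_sum, hrowQ]
    simpa using hcolQ i
  have hcolS : ∀ j, ∑ i, S i j = 1 := by
    intro j
    simp only [hS, Matrix.mul_apply, Matrix.transpose_apply]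
    rw [Finset.sum_comm]
    simp_rw [← Finset.sum_mul, hrowQ]
    simpa using hcolQ j
  have hε4 : 4 * ε ≤ 1 := by
    have h := hrowS 0
    simp only [Fin.sum_univ_four] at h
    have h0 := hεle 0 0; have h1 := hεle 0 1; have h2 := hεle 0 2; have h3 := hεle 0 3
    linarith
  -- the key pointwise bound for the image vector
  have key : ∀ v : Fin 4 → ℝ,
      ∑ i, ((Q - Wmat) *ᵥ v) i ^ 2 ≤ (1 - 4*ε) * ∑ i, (v i)^2 := by
    intro v
    have hPTP : ∀ j k : Fin 4,
        (∑ i, (Q i j - 1/4) * (Q i k - 1/4)) = S j k - 1/4 := by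
      intro j k
      have hj := hcolQ j; have hk := hcolQ k
      simp only [Fin.sum_univ_four] at hj hk
      simp only [hS, Matrix.mul_apply, Matrix.transpose_apply, Fin.sum_univ_four]
      ring_nf
      linarith [hj, hk]
    have hexp : ∑ i, ((Q - Wmat) *ᵥ v) i ^ 2
        = ∑ j, ∑ k, S j k * v j * v k - (∑ i, v i)^2/4 := by
      have e : ∀ j k : Fin 4, S j k = (∑ i, (Q i j - 1/4) * (Q i k - 1/4)) + 1/4 := by
        intro j k; rw [hPTP j k]; ring
      simp only [Matrix.mulVec, dotProduct, Matrix.sub_apply, Wmat,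
        Fin.sum_univ_four]
      simp only [e, Fin.sum_univ_four]
      ring
    calc ∑ i, ((Q - Wmat) *ᵥ v) i ^ 2
        = ∑ j, ∑ k, S j k * v j * v k - (∑ i, v i)^2/4 := hexp
      _ ≤ (1 - 4*ε) * ∑ i, (v i)^2 := keyQuad S ε hεle hrowS hcolS v
  -- operator norm bound
  have hc : euclOpNorm (Q - Wmat) ≤ Real.sqrt (1 - 4*ε) := by
    apply ContinuousLinearMap.opNorm_le_bound _ (Real.sqrt_nonneg _)
    intro x
    have hx : ‖x‖ = Real.sqrt (∑ i, (x i)^2) := by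
      rw [EuclideanSpace.norm_eq]
      congr 1
      exact Finset.sum_congr rfl fun i _ => by rw [Real.norm_eq_abs, sq_abs]
    have hy : ‖(Matrix.toEuclideanLin (Q - Wmat) :
        EuclideanSpace ℝ (Fin 4) →ₗ[ℝ] EuclideanSpace ℝ (Fin 4)).toContinuousLinearMap x‖
        = Real.sqrt (∑ i, ((Q - Wmat) *ᵥ (fun j => x j)) i ^ 2) := by
      rw [LinearMap.coe_toContinuousLinearMap']
      rw [EuclideanSpace.norm_eq]
      congr 1
      refine Finset.sum_congr rfl fun i _ => ?_
      rw [Real.norm_eq_abs, sq_abs]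
      rfl
    rw [hy, hx]
    rw [← Real.sqrt_mul (by linarith)]
    exact Real.sqrt_le_sqrt (key fun j => x j)
  have : Real.sqrt (1 - 4*ε) < 1 := by
    have := (Real.sqrt_lt' one_pos).2 (show 1 - 4*ε < 1^2 by nlinarith)
    simpa using this
  exact lt_of_le_of_lt hc this
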